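/- Each nontrivial element of Aᵒᵖ lies in A·T(L)·w·A: for every nonzero s ∈ L one has s⁻¹ ∈ L and the matrix identity b(s) = a(s⁻¹)·diag(s⁻¹)·w·a(s⁻¹) in SL₂(K). Consequently Aᵒᵖ ⊆ A·T(L)·w·A ∪ {1}. -/

import Mathlib

open Matrix Pointwise

noncomputable section

variable {K : Type*} [Field K]

abbrev SL2 (K : Type*) [Field K] := Matrix.SpecialLinearGroup (Fin 2) K

/-- `a(t) = [[1,t],[0,1]]`. -/
def aMat (t : K) : SL2 K :=
  ⟨!![1, t; 0, 1], by simp [Matrix.det_fin_two_of]⟩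

/-- `b(t) = [[1,0],[t,1]]`. -/
def bMat (t : K) : SL2 K :=
  ⟨!![1, 0; t, 1], by simp [Matrix.det_fin_two_of]⟩

/-- `diag(s) = [[s,0],[0,s⁻¹]]`. -/
def diagMat (s : Kˣ) : SL2 K :=
  ⟨!![(s : K), 0; 0, ((s⁻¹ : Kˣ) : K)], by simp [Matrix.det_fin_two_of]⟩

/-- `w = [[0,1],[1,0]]`, in `SL₂` since `char K = 2`. -/
def wMat (K : Type*) [Field K] [CharP K 2] : SL2 K :=
  ⟨!![0, 1; 1, 0], by simp [Matrix.det_fin_two_of, CharTwo.neg_eq]⟩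

def setA (L : AddSubgroup K) : Set (SL2 K) := {g | ∃ t ∈ L, g = aMat t}

def setAop (L : AddSubgroup K) : Set (SL2 K) := {g | ∃ t ∈ L, g = bMat t}

/-- Timmesfeld's `SL₂(L)`. -/
def SL2L (L : AddSubgroup K) : Subgroup (SL2 K) := Subgroup.closure (setA L ∪ setAop L)

/-- The subgroup of `Kˣ` generated by the nonzero elements of `L`. -/
def Tgen (L : AddSubgroup K) : Subgroup Kˣ := Subgroup.closure {u : Kˣ | (u : K) ∈ L}

def setTL (L : AddSubgroup K) : Set (SL2 K) := {g | ∃ s ∈ Tgen L, g = diagMat s}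

def setTK (K : Type*) [Field K] : Set (SL2 K) := {g | ∃ s : Kˣ, g = diagMat s}

def setB (L : AddSubgroup K) : Set (SL2 K) := setTL L * setA L


/-- Each nontrivial element of `Aᵒᵖ` lies in `A·T(L)·w·A`: for nonzero `s ∈ L` one has
`s⁻¹ ∈ L` and `b(s) = a(s⁻¹)·diag(s⁻¹)·w·a(s⁻¹)`; consequently
`Aᵒᵖ ⊆ A·T(L)·w·A ∪ {1}`. -/
theorem bop_in_ATwA
    [CharP K 2] (himperf : ¬ Function.Surjective fun x : K => x ^ 2)
    (L : AddSubgroup K) (hsq : ∀ x : K, x ^ 2 ∈ L)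
    (hvs : ∀ s t : K, t ∈ L → s ^ 2 * t ∈ L) :
    (∀ (s : K) (hs : s ≠ 0), s ∈ L →
        s⁻¹ ∈ L ∧
          bMat s = aMat s⁻¹ * diagMat (Units.mk0 s hs)⁻¹ * wMat K * aMat s⁻¹) ∧
      setAop L ⊆ setA L * setTL L * {wMat K} * setA L ∪ {1} := by
  have key : ∀ (s : K) (hs : s ≠ 0), s ∈ L →
      s⁻¹ ∈ L ∧
        bMat s = aMat s⁻¹ * diagMat (Units.mk0 s hs)⁻¹ * wMat K * aMat s⁻¹ := by
    intro s hs hsL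
    have hinv : s⁻¹ ∈ L := by
      have := hvs s⁻¹ s hsL
      rwa [show s⁻¹ ^ 2 * s = s⁻¹ by field_simp] at this
    refine ⟨hinv, ?_⟩
    ext i j
    simp only [Matrix.SpecialLinearGroup.coe_mul]
    fin_cases i <;> fin_cases j <;>
      simp [aMat, bMat, diagMat, wMat, Matrix.mul_apply, Fin.sum_univ_two,
        inv_inv, hs, CharTwo.add_self_eq_zero]
  refine ⟨key, ?_⟩
  rintro g ⟨s, hsL, rfl⟩
  by_cases hs : s = 0
  · right
    subst hs
    have : bMat (0 : K) = 1 := by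
      ext i j; fin_cases i <;> fin_cases j <;> simp [bMat]
    simp [this]
  · left
    obtain ⟨hinv, heq⟩ := key s hs hsL
    rw [heq]
    refine Set.mul_mem_mul (Set.mul_mem_mul (Set.mul_mem_mul ?_ ?_) rfl) ?_
    · exact ⟨s⁻¹, hinv, rfl⟩
    · refine ⟨(Units.mk0 s hs)⁻¹, ?_, rfl⟩
      exact inv_mem (Subgroup.subset_closure (by simpa using hsL))
    · exact ⟨s⁻¹, hinv, rfl⟩

end
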